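/- Let P = (x_i) be a sequence in [0,1), f an IET with n intervals, and P* = (f(x_i)). If P is a low-discrepancy sequence (D*_N(P) = O(N^{-1} log N)), then P* is also a low-discrepancy sequence. -/

import Mathlib

open Set Finset

/-- Star-discrepancy of the first `N` points of a sequence in `[0,1)`. -/
noncomputable def starDisc (N : ℕ) (x : ℕ → ℝ) : ℝ :=
  sSup {d : ℝ | ∃ a ∈ Set.Icc (0:ℝ) 1,
    d = |(((Finset.range N).filter (fun i => x i < a)).card : ℝ) / N - a|}

/-- Star-discrepancy of a finite point set in `[0,1)`. -/
noncomputable def starDiscP (N : ℕ) (x : Fin N → ℝ) : ℝ :=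
  sSup {d : ℝ | ∃ a ∈ Set.Icc (0:ℝ) 1,
    d = |((Finset.univ.filter (fun i => x i < a)).card : ℝ) / N - a|}

/-- A sequence in `[0,1)` is a low-discrepancy sequence if `D_N^* = O(log N / N)`. -/
def LowDisc (x : ℕ → ℝ) : Prop :=
  ∃ C : ℝ, 0 < C ∧ ∀ N : ℕ, 2 ≤ N → starDisc N x ≤ C * Real.log N / N

/-- `f` is an interval exchange transformation of `[0,1)` with `n` intervals:
a bijection of `[0,1)` which is a translation on each of `n` consecutive subintervals. -/
def IsIET (n : ℕ) (f : ℝ → ℝ) : Prop :=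
  Set.BijOn f (Set.Ico 0 1) (Set.Ico 0 1) ∧
  ∃ Λ : Fin (n+1) → ℝ, Λ 0 = 0 ∧ Λ (Fin.last n) = 1 ∧ StrictMono Λ ∧
    ∀ i : Fin n, ∃ c : ℝ, ∀ x ∈ Set.Ico (Λ i.castSucc) (Λ i.succ), f x = x + c

private lemma clamp_iff {u v t y : ℝ} (hy : u ≤ y) (hyv : y < v) :
    y < t ↔ y < max u (min v t) := by
  constructor
  · intro h
    exact lt_max_of_lt_right (lt_min hyv h)
  · intro h
    rcases lt_max_iff.mp h with h' | h'
    · exact absurd h' (not_lt.mpr hy)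
    · exact h'.trans_le (min_le_right _ _)

private lemma exists_piece {n : ℕ} {Λ : Fin (n+1) → ℝ} (h0 : Λ 0 = 0)
    (h1 : Λ (Fin.last n) = 1) (hm : StrictMono Λ) {y : ℝ}
    (hy0 : 0 ≤ y) (hy1 : y < 1) :
    ∃ j : Fin n, Λ j.castSucc ≤ y ∧ y < Λ j.succ := by
  classical
  have hn : 0 < n := by
    by_contra h
    push_neg at h
    interval_cases n
    rw [show (Fin.last 0) = 0 from rfl, h0] at h1
    norm_num at h1
  set s : Finset (Fin n) := Finset.univ.filter (fun j => Λ j.castSucc ≤ y) with hs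
  have hne : s.Nonempty := by
    refine ⟨⟨0, hn⟩, ?_⟩
    have h00 : (Fin.castSucc ⟨0, hn⟩ : Fin (n+1)) = 0 := rfl
    simp only [hs, Finset.mem_filter, Finset.mem_univ, true_and, h00, h0]
    exact hy0
  set j := s.max' hne with hj
  have hjmem : Λ j.castSucc ≤ y := by
    have := s.max'_mem hne
    simp only [hs, Finset.mem_filter, Finset.mem_univ, true_and] at this
    exact this
  refine ⟨j, hjmem, ?_⟩
  by_contra hcon
  push_neg at hcon
  have hne_last : j.succ ≠ Fin.last n := by
    intro h
    rw [h, h1] at hcon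
    linarith
  obtain ⟨j', hj'⟩ := Fin.exists_castSucc_eq.mpr hne_last
  have hjj' : j < j' := by
    have : j.castSucc < j'.castSucc := by rw [hj']; exact Fin.castSucc_lt_succ (i := j)
    exact Fin.castSucc_lt_castSucc_iff.mp this
  have hmem' : j' ∈ s := by
    simp only [hs, Finset.mem_filter, Finset.mem_univ, true_and]
    rw [hj']
    exact hcon
  exact absurd (s.le_max' j' hmem') (not_le.mpr hjj')

private lemma sum_eq_of_iUnion_Ico {n : ℕ} (u v : Fin n → ℝ) (huv : ∀ j, u j ≤ v j)
    {a : ℝ} (ha : 0 ≤ a)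
    (hdisj : Pairwise (Function.onFun Disjoint (fun j => Set.Ico (u j) (v j))))
    (hU : (⋃ j, Set.Ico (u j) (v j)) = Set.Ico 0 a) :
    ∑ j, (v j - u j) = a := by
  have h1 := MeasureTheory.measure_iUnion (μ := MeasureTheory.volume) hdisj
    (fun i => measurableSet_Ico)
  rw [hU, Real.volume_Ico, sub_zero, tsum_fintype] at h1
  simp_rw [Real.volume_Ico] at h1
  rw [← ENNReal.ofReal_sum_of_nonneg (fun i _ => sub_nonneg.mpr (huv i))] at h1
  exact ((ENNReal.ofReal_eq_ofReal_iff ha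
    (Finset.sum_nonneg (fun i _ => sub_nonneg.mpr (huv i)))).mp h1).symm

private lemma starDisc_nonneg {N : ℕ} (hN : 1 ≤ N) (x : ℕ → ℝ) : 0 ≤ starDisc N x := by
  have hNpos : (0:ℝ) < N := by exact_mod_cast hN
  have hbdd : BddAbove {d : ℝ | ∃ a ∈ Set.Icc (0:ℝ) 1,
      d = |(((Finset.range N).filter (fun i => x i < a)).card : ℝ) / N - a|} := by
    refine ⟨1, ?_⟩
    rintro d ⟨b, hb, rfl⟩
    have hcard : (((Finset.range N).filter (fun i => x i < b)).card : ℝ) ≤ N := by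
      have := Finset.card_filter_le (Finset.range N) (fun i => x i < b)
      rw [Finset.card_range] at this
      exact_mod_cast this
    have hle1 : (((Finset.range N).filter (fun i => x i < b)).card : ℝ) / N ≤ 1 :=
      (div_le_one hNpos).mpr hcard
    have hge0 : (0:ℝ) ≤ (((Finset.range N).filter (fun i => x i < b)).card : ℝ) / N := by
      positivity
    obtain ⟨hb0, hb1⟩ := hb
    rw [abs_le]
    constructor <;> nlinarith
  have h := le_csSup hbdd (show _ ∈ _ from ⟨0, ⟨le_refl 0, zero_le_one⟩, rfl⟩)
  exact le_trans (abs_nonneg _) h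

private lemma key_bound (n N : ℕ) (f : ℝ → ℝ)
    (hbij : Set.BijOn f (Set.Ico 0 1) (Set.Ico 0 1))
    (Λ : Fin (n+1) → ℝ) (h0 : Λ 0 = 0) (h1 : Λ (Fin.last n) = 1) (hsm : StrictMono Λ)
    (c : Fin n → ℝ)
    (hc : ∀ i : Fin n, ∀ y ∈ Set.Ico (Λ i.castSucc) (Λ i.succ), f y = y + c i)
    (x : ℕ → ℝ) (hx : ∀ i, x i ∈ Set.Ico (0:ℝ) 1)
    (hN : 1 ≤ N) {a : ℝ} (ha0 : 0 ≤ a) (ha1 : a ≤ 1) :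
    |(((Finset.range N).filter (fun i => f (x i) < a)).card : ℝ) / N - a|
      ≤ 2 * n * starDisc N x := by
  classical
  have hNpos : (0:ℝ) < N := by exact_mod_cast hN
  set D := starDisc N x with hD
  -- basic discrepancy bound for the original sequence
  have hmemD : ∀ t : ℝ, 0 ≤ t → t ≤ 1 →
      |(((Finset.range N).filter (fun i => x i < t)).card : ℝ) / N - t| ≤ D := by
    intro t ht0 ht1
    apply le_csSup
    · refine ⟨1, ?_⟩
      rintro d ⟨b, hb, rfl⟩
      have hcard : (((Finset.range N).filter (fun i => x i < b)).card : ℝ) ≤ N := by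
        have := Finset.card_filter_le (Finset.range N) (fun i => x i < b)
        rw [Finset.card_range] at this
        exact_mod_cast this
      have hnn : (0:ℝ) ≤ (((Finset.range N).filter (fun i => x i < b)).card : ℝ) := by
        positivity
      have hle1 : (((Finset.range N).filter (fun i => x i < b)).card : ℝ) / N ≤ 1 :=
        (div_le_one hNpos).mpr hcard
      have hge0 : (0:ℝ) ≤ (((Finset.range N).filter (fun i => x i < b)).card : ℝ) / N := by
        positivity
      rw [abs_le]
      constructor <;> [skip; skip] <;> obtain ⟨hb0, hb1⟩ := hb <;> nlinarith
    · exact ⟨t, ⟨ht0, ht1⟩, rfl⟩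
  have hΛ0 : ∀ i : Fin (n+1), 0 ≤ Λ i := fun i => h0 ▸ hsm.monotone (Fin.zero_le i)
  have hΛ1 : ∀ i : Fin (n+1), Λ i ≤ 1 := fun i => h1 ▸ hsm.monotone (Fin.le_last i)
  set m : Fin n → ℝ := fun j => max (Λ j.castSucc) (min (Λ j.succ) (a - c j)) with hmdef
  have hm1 : ∀ j, Λ j.castSucc ≤ m j := fun j => le_max_left _ _
  have hm2 : ∀ j, m j ≤ Λ j.succ := fun j =>
    max_le (le_of_lt (hsm (Fin.castSucc_lt_succ (i := j)))) (min_le_left _ _)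
  have hiff : ∀ (j : Fin n) (y : ℝ), Λ j.castSucc ≤ y → y < Λ j.succ →
      (f y < a ↔ y < m j) := by
    intro j y hy1 hy2
    rw [hc j y ⟨hy1, hy2⟩, show (y + c j < a) ↔ y < a - c j from lt_sub_iff_add_lt.symm]
    exact clamp_iff hy1 hy2
  have hΛsucc_le : ∀ {j j' : Fin n}, j < j' → Λ j.succ ≤ Λ j'.castSucc := by
    intro j j' h
    exact hsm.monotone (Fin.succ_le_castSucc_iff.mpr h)
  have hsub01 : ∀ k : Fin n, Set.Ico (Λ k.castSucc) (m k) ⊆ Set.Ico (0:ℝ) 1 := by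
    intro k y hy
    exact ⟨le_trans (hΛ0 _) hy.1, lt_of_lt_of_le (lt_of_lt_of_le hy.2 (hm2 k)) (hΛ1 _)⟩
  -- pairwise disjointness of the preimage pieces
  have hdisj0 : Pairwise (Function.onFun Disjoint
      (fun j : Fin n => Set.Ico (Λ j.castSucc) (m j))) := by
    intro j j' hne
    rcases lt_or_gt_of_ne hne with h | h
    · exact Set.Ico_disjoint_Ico.mpr (le_trans (min_le_left _ _)
        (le_trans (le_trans (hm2 j) (hΛsucc_le h)) (le_max_right _ _)))
    · exact Set.Ico_disjoint_Ico.mpr (le_trans (min_le_right _ _)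
        (le_trans (le_trans (hm2 j') (hΛsucc_le h)) (le_max_left _ _)))
  -- image of each piece
  have himg : ∀ j, f '' Set.Ico (Λ j.castSucc) (m j)
      = Set.Ico (Λ j.castSucc + c j) (m j + c j) := by
    intro j
    have : Set.EqOn f (fun y => y + c j) (Set.Ico (Λ j.castSucc) (m j)) := by
      intro y hy
      exact hc j y ⟨hy.1, lt_of_lt_of_le hy.2 (hm2 j)⟩
    rw [Set.image_congr this]
    exact Set.image_add_const_Ico _ _ _
  -- union of the pieces is the preimage of [0,a)
  have hpre : (⋃ j, Set.Ico (Λ j.castSucc) (m j))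
      = Set.Ico (0:ℝ) 1 ∩ f ⁻¹' (Set.Ico 0 a) := by
    ext y
    simp only [Set.mem_iUnion, Set.mem_Ico, Set.mem_inter_iff, Set.mem_preimage]
    constructor
    · rintro ⟨j, hy1, hy2⟩
      have h2 : y < Λ j.succ := lt_of_lt_of_le hy2 (hm2 j)
      have hy01 : 0 ≤ y ∧ y < 1 := ⟨le_trans (hΛ0 _) hy1, lt_of_lt_of_le h2 (hΛ1 _)⟩
      refine ⟨hy01, (hbij.mapsTo hy01).1, (hiff j y hy1 h2).mpr hy2⟩
    · rintro ⟨⟨hy0, hy1⟩, _, hfy⟩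
      obtain ⟨j, hj1, hj2⟩ := exists_piece h0 h1 hsm hy0 hy1
      exact ⟨j, hj1, (hiff j y hj1 hj2).mp hfy⟩
  -- total length identity  ∑ (m j - Λ j.castSucc) = a
  have hU : (⋃ j, Set.Ico (Λ j.castSucc + c j) (m j + c j)) = Set.Ico 0 a := by
    have h2 : (⋃ j, Set.Ico (Λ j.castSucc + c j) (m j + c j))
        = f '' (⋃ j, Set.Ico (Λ j.castSucc) (m j)) := by
      rw [Set.image_iUnion]
      exact (Set.iUnion_congr himg).symm
    rw [h2, hpre, Set.image_inter_preimage, hbij.image_eq]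
    rw [Set.Ico_inter_Ico]
    simp [min_eq_right ha1]
  have hdisjI : Pairwise (Function.onFun Disjoint
      (fun j : Fin n => Set.Ico (Λ j.castSucc + c j) (m j + c j))) := by
    intro j j' hne
    have h := hbij.injOn.image_inter (hsub01 j) (hsub01 j')
    have h0' := Set.disjoint_iff_inter_eq_empty.mp (hdisj0 hne)
    show Disjoint (Set.Ico (Λ j.castSucc + c j) (m j + c j))
      (Set.Ico (Λ j'.castSucc + c j') (m j' + c j'))
    rw [Set.disjoint_iff_inter_eq_empty, ← himg j, ← himg j', ← h, h0', Set.image_empty]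
  have hsum_len : ∑ j, (m j - Λ j.castSucc) = a := by
    have := sum_eq_of_iUnion_Ico (fun j => Λ j.castSucc + c j) (fun j => m j + c j)
      (fun j => show Λ j.castSucc + c j ≤ m j + c j by linarith [hm1 j]) ha0 hdisjI hU
    have h2 : ∀ j : Fin n, m j + c j - (Λ j.castSucc + c j) = m j - Λ j.castSucc := by
      intro j; ring
    rwa [Finset.sum_congr rfl (fun j _ => h2 j)] at this
  -- counting
  set A : ℝ → ℕ := fun t => ((Finset.range N).filter (fun i => x i < t)).card with hA
  set B : Fin n → Finset ℕ := fun j =>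
    (Finset.range N).filter (fun i => Λ j.castSucc ≤ x i ∧ x i < m j) with hB
  have hBcard : ∀ j, ((B j).card : ℝ) = (A (m j) : ℝ) - (A (Λ j.castSucc) : ℝ) := by
    intro j
    have hset : B j = ((Finset.range N).filter (fun i => x i < m j))
        \ ((Finset.range N).filter (fun i => x i < Λ j.castSucc)) := by
      ext i
      simp only [hB, Finset.mem_filter, Finset.mem_sdiff, Finset.mem_range, not_and, not_lt]
      constructor
      · rintro ⟨h1, h2, h3⟩
        exact ⟨⟨h1, h3⟩, fun _ => h2⟩
      · rintro ⟨⟨h1, h2⟩, h3⟩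
        exact ⟨h1, h3 h1, h2⟩
    have hsubf : ((Finset.range N).filter (fun i => x i < Λ j.castSucc))
        ⊆ ((Finset.range N).filter (fun i => x i < m j)) := by
      intro i hi
      simp only [Finset.mem_filter, Finset.mem_range] at hi ⊢
      exact ⟨hi.1, lt_of_lt_of_le hi.2 (hm1 j)⟩
    rw [hset, Finset.card_sdiff_of_subset hsubf, Nat.cast_sub (Finset.card_le_card hsubf)]
  have hdecomp : (Finset.range N).filter (fun i => f (x i) < a) = Finset.univ.biUnion B := by
    ext i
    simp only [hB, Finset.mem_filter, Finset.mem_biUnion, Finset.mem_univ, true_and,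
      Finset.mem_range]
    constructor
    · rintro ⟨hi, hfi⟩
      obtain ⟨j, hj1, hj2⟩ := exists_piece h0 h1 hsm (hx i).1 (hx i).2
      exact ⟨j, hi, hj1, (hiff j _ hj1 hj2).mp hfi⟩
    · rintro ⟨j, hi, hj1, hj2⟩
      exact ⟨hi, (hiff j _ hj1 (lt_of_lt_of_le hj2 (hm2 j))).mpr hj2⟩
  have hfdisj : ∀ j ∈ Finset.univ, ∀ j' ∈ Finset.univ, j ≠ j' → Disjoint (B j) (B j') := by
    intro j _ j' _ hne
    rw [Finset.disjoint_left]
    intro i hi hi'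
    simp only [hB, Finset.mem_filter] at hi hi'
    exact Set.disjoint_left.mp (hdisj0 hne) ⟨hi.2.1, hi.2.2⟩ ⟨hi'.2.1, hi'.2.2⟩
  have hcardsum : ((((Finset.range N).filter (fun i => f (x i) < a)).card : ℝ))
      = ∑ j, ((A (m j) : ℝ) - (A (Λ j.castSucc) : ℝ)) := by
    rw [hdecomp, Finset.card_biUnion hfdisj, Nat.cast_sum]
    exact Finset.sum_congr rfl (fun j _ => hBcard j)
  -- put it all together
  have hkey : (((Finset.range N).filter (fun i => f (x i) < a)).card : ℝ) / N - a
      = ∑ j, (((A (m j) : ℝ) / N - m j) - ((A (Λ j.castSucc) : ℝ) / N - Λ j.castSucc)) := by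
    rw [hcardsum, Finset.sum_div, ← hsum_len, ← Finset.sum_sub_distrib]
    refine Finset.sum_congr rfl (fun j _ => ?_)
    field_simp
    ring
  rw [hkey]
  calc |∑ j, (((A (m j) : ℝ) / N - m j) - ((A (Λ j.castSucc) : ℝ) / N - Λ j.castSucc))|
      ≤ ∑ j, |(((A (m j) : ℝ) / N - m j) - ((A (Λ j.castSucc) : ℝ) / N - Λ j.castSucc))| :=
        Finset.abs_sum_le_sum_abs _ _
    _ ≤ ∑ _j : Fin n, (2 * D) := by
        refine Finset.sum_le_sum (fun j _ => ?_)
        have h1 := hmemD (m j) (le_trans (hΛ0 _) (hm1 j)) (le_trans (hm2 j) (hΛ1 _))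
        have h2 := hmemD (Λ j.castSucc) (hΛ0 _) (hΛ1 _)
        calc |(((A (m j) : ℝ) / N - m j) - ((A (Λ j.castSucc) : ℝ) / N - Λ j.castSucc))|
            ≤ |((A (m j) : ℝ) / N - m j)| + |((A (Λ j.castSucc) : ℝ) / N - Λ j.castSucc)| :=
              abs_sub _ _
          _ ≤ 2 * D := by linarith
    _ = 2 * n * D := by
        rw [Finset.sum_const, Finset.card_univ, Fintype.card_fin, nsmul_eq_mul]
        ring

/-- If `P` is a low-discrepancy sequence in `[0,1)` and `f` is an IET with
`n` intervals, then `P* = (f(x_i))` is also a low-discrepancy sequence. -/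
theorem lowDisc_of_iet_image (n : ℕ) (f : ℝ → ℝ) (hf : IsIET n f)
    (x : ℕ → ℝ) (hx : ∀ i, x i ∈ Set.Ico (0:ℝ) 1)
    (hP : LowDisc x) : LowDisc (fun i => f (x i)) := by
  obtain ⟨hbij, Λ, h0, h1, hsm, hpiece⟩ := hf
  choose c hc using hpiece
  obtain ⟨C, hC, hbound⟩ := hP
  have hn : 0 < n := by
    by_contra h
    push_neg at h
    interval_cases n
    rw [show (Fin.last 0) = 0 from rfl, h0] at h1
    norm_num at h1
  refine ⟨2 * n * C, by positivity, fun N hN => ?_⟩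
  have hN1 : 1 ≤ N := le_trans (by norm_num) hN
  have hstep : starDisc N (fun i => f (x i)) ≤ 2 * n * starDisc N x := by
    apply Real.sSup_le
    · rintro d ⟨a, ⟨ha0, ha1⟩, rfl⟩
      exact key_bound n N f hbij Λ h0 h1 hsm c hc x hx hN1 ha0 ha1
    · have := starDisc_nonneg hN1 x
      positivity
  have hDnn : 0 ≤ starDisc N x := starDisc_nonneg hN1 x
  calc starDisc N (fun i => f (x i)) ≤ 2 * n * starDisc N x := hstep
    _ ≤ 2 * n * (C * Real.log N / N) := by
        have := hbound N hN
        nlinarith [this, show (0:ℝ) ≤ 2 * n by positivity]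
    _ = 2 * n * C * Real.log N / N := by ring
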